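/- (Backlog bound.) Let R, R* : ℝ≥0 → ℝ≥0 be the arrival and departure flows of a system, let α, β : ℝ≥0 → ℝ≥0, and suppose: (i) R is α-constrained, i.e., R(t) − R(s) ≤ α(t − s) for all 0 ≤ s ≤ t; and (ii) the system offers service curve β, i.e., R*(t) ≥ (R ⊗ β)(t) for all t ≥ 0. Then for every t ≥ 0, the backlog b(t) = R(t) − R*(t) satisfies b(t) ≤ sup_{u ≥ 0} (α(u) − β(u)), the maximum vertical distance between α and β. -/

import Mathlib

open scoped NNReal

/-- Min-plus convolution of `f` and `g`:
`(f ⊗ g)(t) = inf_{0 ≤ s ≤ t} (f s + g (t - s))`. -/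
noncomputable def minPlusConv (f g : ℝ≥0 → ℝ≥0) (t : ℝ≥0) : ℝ≥0 :=
  sInf {x : ℝ≥0 | ∃ s : ℝ≥0, s ≤ t ∧ x = f s + g (t - s)}

/-- Backlog bound: if `R` is `α`-constrained and the system offers service curve `β`
(`R* ≥ R ⊗ β`), then for every `t`, the backlog `R t - R* t` is bounded by the
maximum vertical distance `sup_{u ≥ 0} (α u - β u)` (taken in `ℝ ∪ {+∞}`). -/
theorem backlog_bound (R Rstar α β : ℝ≥0 → ℝ≥0)
    (hα : ∀ s t : ℝ≥0, s ≤ t → (R t : ℝ) - (R s : ℝ) ≤ (α (t - s) : ℝ))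
    (hβ : ∀ t : ℝ≥0, minPlusConv R β t ≤ Rstar t) :
    ∀ t : ℝ≥0,
      ((R t : ℝ) : EReal) - ((Rstar t : ℝ) : EReal) ≤
        ⨆ u : ℝ≥0, (((α u : ℝ) : EReal) - ((β u : ℝ) : EReal)) := by
  intro t
  set f : ℝ≥0 → EReal := fun u => (((α u : ℝ) : EReal) - ((β u : ℝ) : EReal)) with hf
  rcases eq_or_ne (⨆ u : ℝ≥0, f u) ⊤ with htop | htop
  · rw [htop]; exact le_top
  · -- the sup is a real number
    have hbot : (⨆ u : ℝ≥0, f u) ≠ ⊥ := by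
      intro h
      have h0 : f 0 ≤ ⊥ := h ▸ le_iSup f 0
      have : f 0 = (((α 0 : ℝ) - (β 0 : ℝ) : ℝ) : EReal) := by
        simp [hf, EReal.coe_sub]
      rw [this] at h0
      exact (EReal.bot_lt_coe _).not_ge h0
    set M : ℝ := (⨆ u : ℝ≥0, f u).toReal with hM
    have hMeq : ((M : ℝ) : EReal) = ⨆ u : ℝ≥0, f u := EReal.coe_toReal htop hbot
    have hfu : ∀ u : ℝ≥0, (α u : ℝ) - (β u : ℝ) ≤ M := by
      intro u
      have h1 : f u ≤ ((M : ℝ) : EReal) := hMeq ▸ le_iSup f u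
      have h2 : f u = (((α u : ℝ) - (β u : ℝ) : ℝ) : EReal) := by
        simp [hf, EReal.coe_sub]
      rw [h2] at h1
      exact_mod_cast h1
    have key : (R t : ℝ) - (Rstar t : ℝ) ≤ M := by
      apply le_of_forall_pos_le_add
      intro ε hε
      set ε' : ℝ≥0 := ⟨ε, hε.le⟩ with hε'
      have hε'pos : 0 < ε' := hε
      -- the set defining the conv
      have hne : {x : ℝ≥0 | ∃ s : ℝ≥0, s ≤ t ∧ x = R s + β (t - s)}.Nonempty :=
        ⟨R 0 + β (t - 0), 0, zero_le, rfl⟩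
      have hlt : minPlusConv R β t < minPlusConv R β t + ε' :=
        lt_add_of_pos_right _ hε'pos
      obtain ⟨x, ⟨s, hst, hx⟩, hxlt⟩ := exists_lt_of_csInf_lt hne hlt
      have hxR : x < Rstar t + ε' := hxlt.trans_le (add_le_add_left (hβ t) ε')
      have h1 : (R s : ℝ) + (β (t - s) : ℝ) < (Rstar t : ℝ) + ε := by
        have := hxR
        rw [hx] at this
        exact_mod_cast this
      have h2 : (R t : ℝ) - (R s : ℝ) ≤ (α (t - s) : ℝ) := hα s t hst
      have h3 : (α (t - s) : ℝ) - (β (t - s) : ℝ) ≤ M := hfu (t - s)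
      linarith
    calc ((R t : ℝ) : EReal) - ((Rstar t : ℝ) : EReal)
        = (((R t : ℝ) - (Rstar t : ℝ) : ℝ) : EReal) := by rw [EReal.coe_sub]
      _ ≤ ((M : ℝ) : EReal) := by exact_mod_cast key
      _ = _ := hMeq
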